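/- Let X_1,…,X_m and Y_1,…,Y_m be bases of 𝔥 dual with respect to Q_𝔥 and C_𝔥 := −Σ_r ad(X_r) ∘ ad(Y_r) (it preserves 𝔪); let β(X,Y) := −tr_𝔤(ad X ∘ ad Y) be the negative of the Killing form of 𝔤. Then for all X,Y ∈ 𝔪: (i) ⟨C_𝔥 X, Y⟩ = Σ_i Q_𝔥([X,Z_i]_𝔥, [Y,Z_i]_𝔥); (ii) β(X,Y) = Σ_i ⟨[X,Z_i]_𝔪,[Y,Z_i]_𝔪⟩ + 2 Σ_i Q_𝔥([X,Z_i]_𝔥,[Y,Z_i]_𝔥). -/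
import Mathlib

open scoped BigOperators

open TensorProduct in
theorem trace_aux {𝔤 : Type*} [AddCommGroup 𝔤] [Module ℝ 𝔤] [FiniteDimensional ℝ 𝔤]
    {ι : Type*} [Fintype ι]
    (e : ι → 𝔤) (ε : ι → (𝔤 →ₗ[ℝ] ℝ))
    (h : ∀ g, ∑ j, ε j g • e j = g) (f : 𝔤 →ₗ[ℝ] 𝔤) :
    LinearMap.trace ℝ 𝔤 f = ∑ j, ε j (f (e j)) := by
  have h1 : (∑ j, f ∘ₗ (ε j).smulRight (e j)) = f := by
    ext g
    rw [LinearMap.sum_apply]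
    conv_rhs => rw [← h g]
    rw [map_sum]
    simp
  conv_lhs => rw [← h1]
  rw [map_sum]
  refine Finset.sum_congr rfl fun j _ => ?_
  have h2 : f ∘ₗ (ε j).smulRight (e j) = dualTensorHom ℝ 𝔤 𝔤 (ε j ⊗ₜ f (e j)) := by
    ext g; simp
  rw [h2, LinearMap.trace_eq_contract_apply, contractLeft_apply]

theorem stmt15
    {𝔤 : Type*} [LieRing 𝔤] [LieAlgebra ℝ 𝔤] [FiniteDimensional ℝ 𝔤]
    (𝔥 𝔪 : Submodule ℝ 𝔤)
    (p𝔥 p𝔪 : 𝔤 →ₗ[ℝ] 𝔤)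
    (hsum : ∀ x, p𝔥 x + p𝔪 x = x)
    (hmem𝔥 : ∀ x, p𝔥 x ∈ 𝔥) (hmem𝔪 : ∀ x, p𝔪 x ∈ 𝔪)
    (hid𝔥 : ∀ x ∈ 𝔥, p𝔥 x = x) (hid𝔪 : ∀ x ∈ 𝔪, p𝔪 x = x)
    (hsub : ∀ x ∈ 𝔥, ∀ y ∈ 𝔥, ⁅x, y⁆ ∈ 𝔥)
    (hhm : ∀ x ∈ 𝔥, ∀ y ∈ 𝔪, ⁅x, y⁆ ∈ 𝔪)
    (Q : LinearMap.BilinForm ℝ 𝔤)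
    (hQsymm : ∀ x y, Q x y = Q y x)
    (hQinv : ∀ w u v : 𝔤, Q ⁅w, u⁆ v + Q u ⁅w, v⁆ = 0)
    (hQ𝔥𝔪 : ∀ x ∈ 𝔥, ∀ y ∈ 𝔪, Q x y = 0)
    (hQpos𝔪 : ∀ x ∈ 𝔪, x ≠ 0 → 0 < Q x x)
    (hQ𝔥nd : ∀ x ∈ 𝔥, (∀ y ∈ 𝔥, Q x y = 0) → x = 0)
    {n : ℕ} (Z : Fin n → 𝔤) (hZ𝔪 : ∀ i, Z i ∈ 𝔪)
    (hZon : ∀ i j, Q (Z i) (Z j) = if i = j then 1 else 0)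
    (hZspan : Submodule.span ℝ (Set.range Z) = 𝔪)
    {m : ℕ} (X Y : Fin m → 𝔤)
    (hX𝔥 : ∀ r, X r ∈ 𝔥) (hY𝔥 : ∀ r, Y r ∈ 𝔥)
    (hdual : ∀ r s, Q (X r) (Y s) = if r = s then 1 else 0)
    (hXspan : Submodule.span ℝ (Set.range X) = 𝔥)
    (hYspan : Submodule.span ℝ (Set.range Y) = 𝔥) :
    ∀ x ∈ 𝔪, ∀ y ∈ 𝔪,
      (Q (-∑ r, ⁅X r, ⁅Y r, x⁆⁆) y = ∑ i, Q (p𝔥 ⁅x, Z i⁆) (p𝔥 ⁅y, Z i⁆)) ∧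
      (-(LinearMap.trace ℝ 𝔤 ((LieAlgebra.ad ℝ 𝔤 x) ∘ₗ (LieAlgebra.ad ℝ 𝔤 y))) =
        ∑ i, Q (p𝔪 ⁅x, Z i⁆) (p𝔪 ⁅y, Z i⁆)
          + 2 * ∑ i, Q (p𝔥 ⁅x, Z i⁆) (p𝔥 ⁅y, Z i⁆)) := by
  intro x hx y hy
  -- Q vanishes on 𝔪 × 𝔥
  have hQmh : ∀ u ∈ 𝔪, ∀ h ∈ 𝔥, Q u h = 0 := fun u hu h hh => by
    rw [hQsymm]; exact hQ𝔥𝔪 h hh u hu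
  have hQnegneg : ∀ a b : 𝔤, Q (-a) (-b) = Q a b := fun a b => by
    rw [map_neg, map_neg Q, LinearMap.neg_apply, neg_neg]
  -- projections don't change Q-pairing with the right factor
  have hp𝔥Q : ∀ w : 𝔤, ∀ h ∈ 𝔥, Q (p𝔥 w) h = Q w h := by
    intro w h hh
    conv_rhs => rw [← hsum w]
    rw [map_add, LinearMap.add_apply, hQmh _ (hmem𝔪 w) h hh, add_zero]
  have hp𝔪Q : ∀ w : 𝔤, ∀ v ∈ 𝔪, Q (p𝔪 w) v = Q w v := by
    intro w v hv
    conv_rhs => rw [← hsum w]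
    rw [map_add, LinearMap.add_apply, hQ𝔥𝔪 _ (hmem𝔥 w) v hv, zero_add]
  -- expansions in the spanning families
  have expand𝔥 : ∀ h ∈ 𝔥, ∑ r, Q h (Y r) • X r = h := by
    intro h hh
    have hh' : h ∈ Submodule.span ℝ (Set.range X) := by rw [hXspan]; exact hh
    obtain ⟨c, hc⟩ := (Submodule.mem_span_range_iff_exists_fun ℝ).1 hh'
    have hcoeff : ∀ s, Q h (Y s) = c s := by
      intro s
      rw [← hc]
      simp [map_sum, LinearMap.sum_apply, map_smul, LinearMap.smul_apply, smul_eq_mul, hdual,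
        mul_ite, mul_one, mul_zero]
    simp_rw [hcoeff]
    exact hc
  have expand𝔪 : ∀ v ∈ 𝔪, ∑ i, Q v (Z i) • Z i = v := by
    intro v hv
    have hv' : v ∈ Submodule.span ℝ (Set.range Z) := by rw [hZspan]; exact hv
    obtain ⟨c, hc⟩ := (Submodule.mem_span_range_iff_exists_fun ℝ).1 hv'
    have hcoeff : ∀ j, Q v (Z j) = c j := by
      intro j
      rw [← hc]
      simp [map_sum, LinearMap.sum_apply, map_smul, LinearMap.smul_apply, smul_eq_mul, hZon,
        mul_ite, mul_one, mul_zero]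
    simp_rw [hcoeff]
    exact hc
  -- Parseval on 𝔪
  have parseval : ∀ u ∈ 𝔪, ∀ v ∈ 𝔪, ∑ i, Q u (Z i) * Q v (Z i) = Q u v := by
    intro u hu v hv
    conv_rhs => rw [← expand𝔪 u hu]
    rw [map_sum, LinearMap.sum_apply]
    refine Finset.sum_congr rfl fun i _ => ?_
    rw [map_smul, LinearMap.smul_apply, smul_eq_mul, hQsymm v (Z i)]
  -- pairing on 𝔥 via dual bases
  have h𝔥pair : ∀ a ∈ 𝔥, ∀ b ∈ 𝔥, Q a b = ∑ r, Q a (Y r) * Q (X r) b := by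
    intro a ha b hb
    conv_lhs => rw [← expand𝔥 a ha]
    rw [map_sum, LinearMap.sum_apply]
    refine Finset.sum_congr rfl fun r _ => ?_
    rw [map_smul, LinearMap.smul_apply, smul_eq_mul]
  -- key coefficient identities
  have coeff1 : ∀ (w : 𝔤) (r : Fin m) (i : Fin n),
      Q (p𝔥 ⁅w, Z i⁆) (Y r) = Q ⁅Y r, w⁆ (Z i) := by
    intro w r i
    rw [hp𝔥Q _ _ (hY𝔥 r)]
    have h1 := hQinv w (Z i) (Y r)
    have h3 : Q (Z i) ⁅w, Y r⁆ = - Q (Z i) ⁅Y r, w⁆ := by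
      rw [← lie_skew w (Y r), map_neg]
    have h4 : Q (Z i) ⁅Y r, w⁆ = Q ⁅Y r, w⁆ (Z i) := hQsymm _ _
    linarith
  have key1 : ∀ i, Q (p𝔥 ⁅x, Z i⁆) (p𝔥 ⁅y, Z i⁆)
      = ∑ r, Q ⁅Y r, x⁆ (Z i) * Q ⁅X r, y⁆ (Z i) := by
    intro i
    rw [h𝔥pair _ (hmem𝔥 _) _ (hmem𝔥 _)]
    refine Finset.sum_congr rfl fun r _ => ?_
    congr 1
    · exact coeff1 x r i
    · -- Q (X r) (p𝔥 ⁅y, Z i⁆) = Q ⁅X r, y⁆ (Z i)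
      rw [hQsymm, hp𝔥Q _ _ (hX𝔥 r)]
      have h1 := hQinv y (Z i) (X r)
      have h3 : Q (Z i) ⁅y, X r⁆ = - Q (Z i) ⁅X r, y⁆ := by
        rw [← lie_skew y (X r), map_neg]
      have h4 : Q (Z i) ⁅X r, y⁆ = Q ⁅X r, y⁆ (Z i) := hQsymm _ _
      linarith
  have parts1 : ∑ i, Q (p𝔥 ⁅x, Z i⁆) (p𝔥 ⁅y, Z i⁆) = ∑ r, Q ⁅Y r, x⁆ ⁅X r, y⁆ := by
    simp_rw [key1]
    rw [Finset.sum_comm]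
    exact Finset.sum_congr rfl fun r _ =>
      parseval _ (hhm _ (hY𝔥 r) x hx) _ (hhm _ (hX𝔥 r) y hy)
  have lhs1 : Q (-∑ r, ⁅X r, ⁅Y r, x⁆⁆) y = ∑ r, Q ⁅Y r, x⁆ ⁅X r, y⁆ := by
    rw [map_neg, LinearMap.neg_apply, map_sum, LinearMap.sum_apply, ← Finset.sum_neg_distrib]
    refine Finset.sum_congr rfl fun r _ => ?_
    have := hQinv (X r) ⁅Y r, x⁆ y
    linarith
  constructor
  · rw [lhs1, parts1]
  -- part (ii)
  · set f := (LieAlgebra.ad ℝ 𝔤 x) ∘ₗ (LieAlgebra.ad ℝ 𝔤 y) with hf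
    have htr : LinearMap.trace ℝ 𝔤 f =
        (∑ r, Q ⁅x, ⁅y, X r⁆⁆ (Y r)) + ∑ i, Q ⁅x, ⁅y, Z i⁆⁆ (Z i) := by
      have := trace_aux (Sum.elim X Z)
        (Sum.elim (fun r => Q.flip (Y r)) (fun i => Q.flip (Z i)))
        (fun g => by
          rw [Fintype.sum_sum_type]
          show (∑ r, Q g (Y r) • X r) + ∑ i, Q g (Z i) • Z i = g
          have e1 : ∀ r, Q g (Y r) = Q (p𝔥 g) (Y r) := fun r => (hp𝔥Q g _ (hY𝔥 r)).symm
          have e2 : ∀ i, Q g (Z i) = Q (p𝔪 g) (Z i) := fun i => (hp𝔪Q g _ (hZ𝔪 i)).symm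
          simp_rw [e1, e2]
          rw [expand𝔥 _ (hmem𝔥 g), expand𝔪 _ (hmem𝔪 g), hsum]) f
      rw [this, Fintype.sum_sum_type]
      rfl
    have tA : ∀ r : Fin m, Q ⁅x, ⁅y, X r⁆⁆ (Y r) = - Q ⁅Y r, x⁆ ⁅X r, y⁆ := by
      intro r
      have h1 := hQinv x ⁅y, X r⁆ (Y r)
      have h2 : Q ⁅y, X r⁆ ⁅x, Y r⁆ = Q ⁅X r, y⁆ ⁅Y r, x⁆ := by
        rw [← lie_skew y (X r), ← lie_skew x (Y r), hQnegneg]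
      have h3 : Q ⁅X r, y⁆ ⁅Y r, x⁆ = Q ⁅Y r, x⁆ ⁅X r, y⁆ := hQsymm _ _
      linarith
    have tB : ∀ i : Fin n, Q ⁅x, ⁅y, Z i⁆⁆ (Z i) =
        -(Q (p𝔪 ⁅x, Z i⁆) (p𝔪 ⁅y, Z i⁆) + Q (p𝔥 ⁅x, Z i⁆) (p𝔥 ⁅y, Z i⁆)) := by
      intro i
      have h1 := hQinv x ⁅y, Z i⁆ (Z i)
      have e1 : Q ⁅y, Z i⁆ (p𝔥 ⁅x, Z i⁆) = Q (p𝔥 ⁅x, Z i⁆) (p𝔥 ⁅y, Z i⁆) := by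
        rw [← hp𝔥Q ⁅y, Z i⁆ _ (hmem𝔥 ⁅x, Z i⁆), hQsymm]
      have e2 : Q ⁅y, Z i⁆ (p𝔪 ⁅x, Z i⁆) = Q (p𝔪 ⁅x, Z i⁆) (p𝔪 ⁅y, Z i⁆) := by
        rw [← hp𝔪Q ⁅y, Z i⁆ _ (hmem𝔪 ⁅x, Z i⁆), hQsymm]
      have esplit : Q ⁅y, Z i⁆ ⁅x, Z i⁆
          = Q ⁅y, Z i⁆ (p𝔥 ⁅x, Z i⁆) + Q ⁅y, Z i⁆ (p𝔪 ⁅x, Z i⁆) := by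
        conv_lhs => rw [← hsum ⁅x, Z i⁆]
        rw [map_add]
      linarith
    rw [htr]
    simp_rw [tA, tB]
    rw [Finset.sum_neg_distrib, Finset.sum_neg_distrib, Finset.sum_add_distrib, ← parts1]
    ring
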